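/- Let f have L_p-Lipschitz p-th derivative and x* = argmin f. If z minimizes w ↦ f_p(x̃+w, x̃) + (L_p/p!)‖w‖^{p+1}, then f(x̃ + z) + (L_p p/(p+1)!)‖z‖^{p+1} ≤ f(x̃), and consequently ‖z‖^{p+1} ≤ ((p+1)!/(L_p p)) (f(x̃) − f(x*)). -/

import Mathlib

open Set Finset
set_option maxHeartbeats 1000000

theorem taylor_min_decrease (d p : ℕ) (hp : 1 ≤ p) (L : ℝ) (hL : 0 < L)
    (f : EuclideanSpace ℝ (Fin d) → ℝ) (hf : ContDiff ℝ p f)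
    (hLip : ∀ u v, ‖iteratedFDeriv ℝ p f u - iteratedFDeriv ℝ p f v‖ ≤ L * ‖u - v‖)
    (xt xs : EuclideanSpace ℝ (Fin d)) (hxs : ∀ w, f xs ≤ f w)
    (z : EuclideanSpace ℝ (Fin d))
    (fp : EuclideanSpace ℝ (Fin d) → ℝ)
    (hfp : ∀ w, fp w = ∑ i ∈ Finset.range (p + 1),
      (1 / (Nat.factorial i : ℝ)) * iteratedFDeriv ℝ i f xt (fun _ => w))
    (hz : ∀ w, fp z + (L / (Nat.factorial p : ℝ)) * ‖z‖ ^ (p + 1) ≤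
      fp w + (L / (Nat.factorial p : ℝ)) * ‖w‖ ^ (p + 1)) :
    f (xt + z) + (L * p / (Nat.factorial (p + 1) : ℝ)) * ‖z‖ ^ (p + 1) ≤ f xt ∧
      ‖z‖ ^ (p + 1) ≤ ((Nat.factorial (p + 1) : ℝ) / (L * p)) * (f xt - f xs) := by
  set A : ℝ := ‖z‖ ^ (p + 1) with hA
  have hA0 : 0 ≤ A := by positivity
  set G : ℕ → ℝ → ℝ := fun k t => iteratedFDeriv ℝ k f (xt + t • z) (fun _ => z) with hGdef
  -- derivative of G k is G (k+1) for k < p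
  have hG : ∀ k, k < p → ∀ t : ℝ, HasDerivAt (G k) (G (k + 1) t) t := by
    intro k hk t
    have hy : HasDerivAt (fun t : ℝ => xt + t • z) z t := by
      simpa using ((hasDerivAt_id t).smul_const z).const_add xt
    have hdiff : DifferentiableAt ℝ (iteratedFDeriv ℝ k f) (xt + t • z) :=
      (hf.differentiable_iteratedFDeriv (by exact_mod_cast hk)) _
    have h3 : HasDerivAt (fun s : ℝ => iteratedFDeriv ℝ k f (xt + s • z))
        (fderiv ℝ (iteratedFDeriv ℝ k f) (xt + t • z) z) t :=
      hdiff.hasFDerivAt.comp_hasDerivAt t hy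
    have h4 := ((ContinuousMultilinearMap.apply ℝ (fun _ : Fin k => EuclideanSpace ℝ (Fin d)) ℝ
        (fun _ => z)).hasFDerivAt).comp_hasDerivAt t h3
    refine HasDerivAt.congr_deriv h4 ?_
    rw [hGdef]
    simp only [iteratedFDeriv_succ_apply_left]
    rfl
  -- base Lipschitz bound
  have hbase : ∀ t ∈ Icc (0:ℝ) 1, |G p t - G p 0| ≤ L * A * t := by
    intro t ht
    have h1 : G p t - G p 0 =
        (iteratedFDeriv ℝ p f (xt + t • z) - iteratedFDeriv ℝ p f (xt + (0:ℝ) • z))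
          (fun _ => z) := by
      rw [ContinuousMultilinearMap.sub_apply]
    rw [show |G p t - G p 0| = ‖G p t - G p 0‖ from rfl, h1]
    calc ‖(iteratedFDeriv ℝ p f (xt + t • z) - iteratedFDeriv ℝ p f (xt + (0:ℝ) • z))
          (fun _ => z)‖
        ≤ ‖iteratedFDeriv ℝ p f (xt + t • z) - iteratedFDeriv ℝ p f (xt + (0:ℝ) • z)‖ *
          ∏ _i : Fin p, ‖z‖ := ContinuousMultilinearMap.le_opNorm _ _
      _ ≤ (L * ‖(xt + t • z) - (xt + (0:ℝ) • z)‖) * ‖z‖ ^ p := by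
          rw [Finset.prod_const, Finset.card_univ, Fintype.card_fin]
          exact mul_le_mul_of_nonneg_right (hLip _ _) (by positivity)
      _ = L * A * t := by
          have : (xt + t • z) - (xt + (0:ℝ) • z) = t • z := by
            simp [sub_eq_iff_eq_add]
          rw [this, norm_smul, Real.norm_eq_abs, abs_of_nonneg ht.1, hA]
          ring
  -- main induction
  have hmain : ∀ k, k ≤ p → ∀ t ∈ Icc (0:ℝ) 1,
      |G (p - k) t - ∑ i ∈ range (k + 1), t ^ i / (Nat.factorial i : ℝ) * G (p - k + i) 0| ≤
        L * A * t ^ (k + 1) / (Nat.factorial (k + 1) : ℝ) := by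
    intro k
    induction k with
    | zero =>
      intro _ t ht
      simpa using hbase t ht
    | succ k ih =>
      intro hk1 t ht
      have hk : k ≤ p := le_of_lt hk1
      set m := p - (k + 1) with hm
      have hm1 : m + 1 = p - k := by omega
      have hmp : m < p := by omega
      set F : ℝ → ℝ := fun t =>
        G m t - ∑ i ∈ range (k + 2), t ^ i / (Nat.factorial i : ℝ) * G (m + i) 0 with hF
      set F' : ℝ → ℝ := fun t =>
        G (m + 1) t - ∑ i ∈ range (k + 1), t ^ i / (Nat.factorial i : ℝ) * G (m + 1 + i) 0
        with hF'
      have hder : ∀ s : ℝ, HasDerivAt F (F' s) s := by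
        intro s
        have h1 : HasDerivAt (fun t : ℝ =>
            ∑ i ∈ range (k + 2), t ^ i / (Nat.factorial i : ℝ) * G (m + i) 0)
            (∑ i ∈ range (k + 1), s ^ i / (Nat.factorial i : ℝ) * G (m + 1 + i) 0) s := by
          have h2 : HasDerivAt (fun t : ℝ =>
              ∑ i ∈ range (k + 2), t ^ i / (Nat.factorial i : ℝ) * G (m + i) 0)
              (∑ i ∈ range (k + 2),
                (i : ℝ) * s ^ (i - 1) / (Nat.factorial i : ℝ) * G (m + i) 0) s := by
            apply HasDerivAt.fun_sum
            intro i _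
            have := (hasDerivAt_pow i s).div_const (Nat.factorial i : ℝ)
            simpa [mul_comm, mul_assoc, mul_div_assoc] using
              this.mul_const (G (m + i) 0)
          convert h2 using 1
          rw [Finset.sum_range_succ' (fun i => (i : ℝ) * s ^ (i - 1) / (Nat.factorial i : ℝ)
            * G (m + i) 0) (k + 1)]
          simp only [Nat.cast_zero, zero_mul, zero_div, zero_mul, add_zero]
          apply Finset.sum_congr rfl
          intro i _
          have : ((i + 1 : ℕ) : ℝ) ≠ 0 := by positivity
          field_simp [Nat.factorial_succ]
          ring_nf
          rw [show 1 + i - 1 = i by omega, add_comm 1 i, Nat.factorial_succ]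
          push_cast
          ring
        exact ((hG m hmp s).sub h1)
      have hF0 : F 0 = 0 := by
        rw [hF]
        simp [Finset.sum_range_succ']
      have hbound : ∀ x ∈ Ico (0:ℝ) 1, ‖F' x‖ ≤
          L * A * x ^ (k + 1) / (Nat.factorial (k + 1) : ℝ) := by
        intro x hx
        have := ih hk x ⟨hx.1, le_of_lt hx.2⟩
        rw [hF']
        simp only [hm1]
        simpa [Real.norm_eq_abs] using this
      have hBder : ∀ x : ℝ, HasDerivAt
          (fun t => L * A * t ^ (k + 2) / (Nat.factorial (k + 2) : ℝ))
          (L * A * x ^ (k + 1) / (Nat.factorial (k + 1) : ℝ)) x := by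
        intro x
        have h := ((hasDerivAt_pow (k + 2) x).const_mul (L * A)).div_const
          (Nat.factorial (k + 2) : ℝ)
        refine h.congr_deriv ?_
        have : (Nat.factorial (k + 2) : ℝ) = (k + 2) * (Nat.factorial (k + 1) : ℝ) := by
          rw [Nat.factorial_succ]; push_cast; ring
        rw [this]
        simp only [show k + 2 - 1 = k + 1 by omega]
        push_cast
        have hfac : (Nat.factorial (k + 1) : ℝ) ≠ 0 := by positivity
        field_simp
      have key := image_norm_le_of_norm_deriv_right_le_deriv_boundary
        (f := F) (a := 0) (b := 1)
        (fun x _ => (hder x).continuousAt.continuousWithinAt)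
        (fun x _ => (hder x).hasDerivWithinAt)
        (by rw [hF0]; simp)
        hBder hbound ht
      rw [hF] at key
      simpa [Real.norm_eq_abs] using key
  -- conclusion of Taylor bound
  have htaylor : |f (xt + z) - fp z| ≤ L * A / (Nat.factorial (p + 1) : ℝ) := by
    have h := hmain p le_rfl 1 ⟨zero_le_one, le_rfl⟩
    simp only [Nat.sub_self, zero_add, one_pow] at h
    have hG0 : G 0 1 = f (xt + z) := by
      rw [hGdef]
      simp [iteratedFDeriv_zero_apply]
    have hsum : ∑ i ∈ range (p + 1), (1:ℝ) / (Nat.factorial i : ℝ) * G i 0 = fp z := by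
      rw [hfp]
      apply Finset.sum_congr rfl
      intro i _
      rw [hGdef]
      simp
    rw [hG0, hsum, mul_one] at h
    exact h
  -- fp 0 = f xt
  have hfp0 : fp 0 = f xt := by
    rw [hfp]
    rw [Finset.sum_eq_single_of_mem 0 (Finset.mem_range.2 (Nat.succ_pos p))]
    · simp [iteratedFDeriv_zero_apply]
    · intro i _ hi
      have : (iteratedFDeriv ℝ i f xt) (fun _ => (0:EuclideanSpace ℝ (Fin d))) = 0 := by
        apply ContinuousMultilinearMap.map_coord_zero _ (⟨0, Nat.pos_of_ne_zero hi⟩ : Fin i)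
        rfl
      rw [this, mul_zero]
  have hz0 : fp z + (L / (Nat.factorial p : ℝ)) * A ≤ f xt := by
    have := hz 0
    simpa [hfp0] using this
  have hfacpos : (0:ℝ) < (Nat.factorial p : ℝ) := by positivity
  have hfac1 : (Nat.factorial (p + 1) : ℝ) = (p + 1) * (Nat.factorial p : ℝ) := by
    rw [Nat.factorial_succ]; push_cast; ring
  have hub : f (xt + z) ≤ fp z + L * A / (Nat.factorial (p + 1) : ℝ) := by
    have := abs_le.1 htaylor
    linarith [this.2]
  have first : f (xt + z) + (L * p / (Nat.factorial (p + 1) : ℝ)) * A ≤ f xt := by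
    have h1 : L * A / (Nat.factorial (p + 1) : ℝ) + (L * p / (Nat.factorial (p + 1) : ℝ)) * A
        = (L / (Nat.factorial p : ℝ)) * A := by
      rw [hfac1]
      field_simp
      ring
    linarith
  refine ⟨first, ?_⟩
  have hps : f xs ≤ f (xt + z) := hxs _
  have hLp : (0:ℝ) < L * p := by
    have : (1:ℝ) ≤ p := by exact_mod_cast hp
    nlinarith
  have hfac2 : (0:ℝ) < (Nat.factorial (p + 1) : ℝ) := by positivity
  have h2 : (L * p / (Nat.factorial (p + 1) : ℝ)) * A ≤ f xt - f xs := by linarith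
  rw [div_mul_eq_mul_div, div_le_iff₀ hfac2] at h2
  rw [div_mul_eq_mul_div, le_div_iff₀ hLp]
  nlinarith [h2]
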